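/- arXiv:2010.03368 — 3 statements merged into one kernel-verified Lean document; each statement's English description precedes it below -/
import Mathlib

section
/- Let W : ℝ³ → ℝ be twice continuously differentiable, let r, θ be twice continuously differentiable on [0, L₀], and let h_r : [0, L₀] → ℝ², h_θ : [0, L₀] → ℝ be continuously differentiable with h_r(0) = h_r(L₀) = 0 and h_θ(0) = h_θ(L₀) = 0. Define the stresses n₁(s) = ∂W/∂ν₁(w(s)), n₂(s) = ∂W/∂ν₂(w(s)), m(s) = ∂W/∂κ(w(s)), where w(s) = (ν₁(s), ν₂(s), κ(s)) are the strains of (r, θ). Then the potential energy 𝒱(ε) = ∫₀^{L₀} W(ν₁^ε(s), ν₂^ε(s), κ^ε(s)) ds of the perturbed configuration (r + ε h_r, θ + ε h_θ) is differentiable at ε = 0 with 𝒱′(0) = −∫₀^{L₀} [ ⟨ d/ds ( n₁(s)𝖺(s) + n₂(s)𝖻(s) ), h_r(s) ⟩ + ( m′(s) + ν₁(s) n₂(s) − ν₂(s) n₁(s) ) h_θ(s) ] ds. In other words, the negative variational gradient of the elastic potential energy is the internal force ∂ₛ(n₁𝖺 + n₂𝖻) together with the internal couple ∂ₛm + ν₁n₂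 − ν₂n₁. -/
open Real intervalIntegral MeasureTheory Set

/-- first strain of perturbed configuration, explicit trig form -/
noncomputable def Vone (r h_r : ℝ → ℝ × ℝ) (θ h_θ : ℝ → ℝ) (ε s : ℝ) : ℝ :=
  ((deriv r s).1 + ε * (deriv h_r s).1) * Real.cos (θ s + ε * h_θ s)
  + ((deriv r s).2 + ε * (deriv h_r s).2) * Real.sin (θ s + ε * h_θ s)

noncomputable def Vtwo (r h_r : ℝ → ℝ × ℝ) (θ h_θ : ℝ → ℝ) (ε s : ℝ) : ℝ :=
  -(((deriv r s).1 + ε * (deriv h_r s).1) * Real.sin (θ s + ε * h_θ s))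
  + ((deriv r s).2 + ε * (deriv h_r s).2) * Real.cos (θ s + ε * h_θ s)

noncomputable def dVone (r h_r : ℝ → ℝ × ℝ) (θ h_θ : ℝ → ℝ) (ε s : ℝ) : ℝ :=
  (deriv h_r s).1 * Real.cos (θ s + ε * h_θ s) + (deriv h_r s).2 * Real.sin (θ s + ε * h_θ s)
  + h_θ s * Vtwo r h_r θ h_θ ε s

noncomputable def dVtwo (r h_r : ℝ → ℝ × ℝ) (θ h_θ : ℝ → ℝ) (ε s : ℝ) : ℝ :=
  -((deriv h_r s).1 * Real.sin (θ s + ε * h_θ s)) + (deriv h_r s).2 * Real.cos (θ s + ε * h_θ s)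
  - h_θ s * Vone r h_r θ h_θ ε s

noncomputable def Fd (W : ℝ × ℝ × ℝ → ℝ) (r h_r : ℝ → ℝ × ℝ) (θ h_θ : ℝ → ℝ) (ε s : ℝ) : ℝ :=
  (fderiv ℝ W (Vone r h_r θ h_θ ε s, Vtwo r h_r θ h_θ ε s, deriv θ s + ε * deriv h_θ s))
    (dVone r h_r θ h_θ ε s, dVtwo r h_r θ h_θ ε s, deriv h_θ s)

lemma clm_expand (L : ℝ × ℝ × ℝ →L[ℝ] ℝ) (p : ℝ × ℝ × ℝ) :
    L p = p.1 * L (1,0,0) + p.2.1 * L (0,1,0) + p.2.2 * L (0,0,1) := by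
  have hp : p = p.1 • ((1:ℝ),(0:ℝ),(0:ℝ)) + p.2.1 • ((0:ℝ),(1:ℝ),(0:ℝ))
      + p.2.2 • ((0:ℝ),(0:ℝ),(1:ℝ)) := by
    simp [Prod.ext_iff]
  nth_rewrite 1 [hp]
  rw [map_add, map_add, L.map_smul, L.map_smul, L.map_smul]
  simp [smul_eq_mul]

/-- HasDerivAt in ε of the strain triple. -/
lemma hasDerivAt_strains (r h_r : ℝ → ℝ × ℝ) (θ h_θ : ℝ → ℝ) (ε s : ℝ) :
    HasDerivAt (fun e => (Vone r h_r θ h_θ e s, Vtwo r h_r θ h_θ e s,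
        deriv θ s + e * deriv h_θ s))
      (dVone r h_r θ h_θ ε s, dVtwo r h_r θ h_θ ε s, deriv h_θ s) ε := by
  have hΘ : HasDerivAt (fun e : ℝ => θ s + e * h_θ s) (h_θ s) ε := by
    simpa using ((hasDerivAt_id ε).mul_const (h_θ s)).const_add (θ s)
  have hc := hΘ.cos
  have hs := hΘ.sin
  have hu1 : HasDerivAt (fun e : ℝ => (deriv r s).1 + e * (deriv h_r s).1)
      ((deriv h_r s).1) ε := by
    simpa using ((hasDerivAt_id ε).mul_const ((deriv h_r s).1)).const_add ((deriv r s).1)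
  have hu2 : HasDerivAt (fun e : ℝ => (deriv r s).2 + e * (deriv h_r s).2)
      ((deriv h_r s).2) ε := by
    simpa using ((hasDerivAt_id ε).mul_const ((deriv h_r s).2)).const_add ((deriv r s).2)
  have h1 : HasDerivAt (fun e => Vone r h_r θ h_θ e s) (dVone r h_r θ h_θ ε s) ε := by
    have := (hu1.mul hc).add (hu2.mul hs)
    refine HasDerivAt.congr_deriv this ?_
    simp only [dVone, Vtwo]; ring
  have h2 : HasDerivAt (fun e => Vtwo r h_r θ h_θ e s) (dVtwo r h_r θ h_θ ε s) ε := by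
    have := ((hu1.mul hs).neg).add (hu2.mul hc)
    refine HasDerivAt.congr_deriv this ?_
    simp only [dVtwo, Vone]; ring
  have h3 : HasDerivAt (fun e : ℝ => deriv θ s + e * deriv h_θ s) (deriv h_θ s) ε := by
    simpa using ((hasDerivAt_id ε).mul_const (deriv h_θ s)).const_add (deriv θ s)
  exact h1.prodMk (h2.prodMk h3)

lemma hasDerivAt_W_strains (W : ℝ × ℝ × ℝ → ℝ) (hW : ContDiff ℝ 2 W)
    (r h_r : ℝ → ℝ × ℝ) (θ h_θ : ℝ → ℝ) (ε s : ℝ) :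
    HasDerivAt (fun e => W (Vone r h_r θ h_θ e s, Vtwo r h_r θ h_θ e s,
        deriv θ s + e * deriv h_θ s)) (Fd W r h_r θ h_θ ε s) ε := by
  have hWd : HasFDerivAt W (fderiv ℝ W (Vone r h_r θ h_θ ε s, Vtwo r h_r θ h_θ ε s,
      deriv θ s + ε * deriv h_θ s)) _ :=
    (hW.differentiable two_ne_zero _).hasFDerivAt
  exact hWd.comp_hasDerivAt ε (hasDerivAt_strains r h_r θ h_θ ε s)

lemma continuous_Fd (W : ℝ × ℝ × ℝ → ℝ) (r h_r : ℝ → ℝ × ℝ) (θ h_θ : ℝ → ℝ)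
    (hW : ContDiff ℝ 2 W) (hr : ContDiff ℝ 2 r) (hθ : ContDiff ℝ 2 θ)
    (hhr : ContDiff ℝ 1 h_r) (hhθ : ContDiff ℝ 1 h_θ) :
    Continuous fun p : ℝ × ℝ => Fd W r h_r θ h_θ p.1 p.2 := by
  have hdr : Continuous (deriv r) :=
    (contDiff_succ_iff_deriv.mp (by norm_num [hr] : ContDiff ℝ (1+1) r)).2.2.continuous
  have hdθ : Continuous (deriv θ) :=
    (contDiff_succ_iff_deriv.mp (by norm_num [hθ] : ContDiff ℝ (1+1) θ)).2.2.continuous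
  have hdhr : Continuous (deriv h_r) := (contDiff_one_iff_deriv.mp hhr).2
  have hdhθ : Continuous (deriv h_θ) := (contDiff_one_iff_deriv.mp hhθ).2
  have hθc : Continuous θ := hθ.continuous
  have hhθc : Continuous h_θ := hhθ.continuous
  have hV1 : Continuous fun p : ℝ × ℝ => Vone r h_r θ h_θ p.1 p.2 := by
    unfold Vone; fun_prop
  have hV2 : Continuous fun p : ℝ × ℝ => Vtwo r h_r θ h_θ p.1 p.2 := by
    unfold Vtwo; fun_prop
  have hdV1 : Continuous fun p : ℝ × ℝ => dVone r h_r θ h_θ p.1 p.2 := by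
    unfold dVone
    exact ((by fun_prop : Continuous fun p : ℝ × ℝ =>
      (deriv h_r p.2).1 * Real.cos (θ p.2 + p.1 * h_θ p.2)
        + (deriv h_r p.2).2 * Real.sin (θ p.2 + p.1 * h_θ p.2))).add
      ((hhθc.comp continuous_snd).mul hV2)
  have hdV2 : Continuous fun p : ℝ × ℝ => dVtwo r h_r θ h_θ p.1 p.2 := by
    unfold dVtwo
    exact ((by fun_prop : Continuous fun p : ℝ × ℝ =>
      -((deriv h_r p.2).1 * Real.sin (θ p.2 + p.1 * h_θ p.2))
        + (deriv h_r p.2).2 * Real.cos (θ p.2 + p.1 * h_θ p.2))).sub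
      ((hhθc.comp continuous_snd).mul hV1)
  have hΦ : Continuous fun p : ℝ × ℝ =>
      (Vone r h_r θ h_θ p.1 p.2, Vtwo r h_r θ h_θ p.1 p.2,
        deriv θ p.2 + p.1 * deriv h_θ p.2) := by
    apply hV1.prodMk (hV2.prodMk _); fun_prop
  have hD : Continuous fun p : ℝ × ℝ =>
      (dVone r h_r θ h_θ p.1 p.2, dVtwo r h_r θ h_θ p.1 p.2, deriv h_θ p.2) := by
    apply hdV1.prodMk (hdV2.prodMk _); fun_prop
  exact Continuous.clm_apply ((hW.continuous_fderiv two_ne_zero).comp hΦ) hD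


/-- Planar dot product. -/
noncomputable def dot (u v : ℝ × ℝ) : ℝ := u.1 * v.1 + u.2 * v.2

/-- The negative variational gradient of the hyperelastic
potential energy 𝒱 = ∫₀^{L₀} W(ν₁, ν₂, κ) ds is the internal force
∂ₛ(n₁𝖺 + n₂𝖻) together with the internal couple ∂ₛm + ν₁n₂ − ν₂n₁, for
variations (h_r, h_θ) vanishing at both endpoints. -/
theorem elastic_energy_first_variation
    (L₀ : ℝ) (hL : 0 < L₀)
    (W : ℝ × ℝ × ℝ → ℝ) (hW : ContDiff ℝ 2 W)
    (r : ℝ → ℝ × ℝ) (θ : ℝ → ℝ) (hr : ContDiff ℝ 2 r) (hθ : ContDiff ℝ 2 θ)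
    (h_r : ℝ → ℝ × ℝ) (h_θ : ℝ → ℝ) (hhr : ContDiff ℝ 1 h_r) (hhθ : ContDiff ℝ 1 h_θ)
    (hr0 : h_r 0 = 0) (hrL : h_r L₀ = 0) (hθ0 : h_θ 0 = 0) (hθL : h_θ L₀ = 0)
    (a b : ℝ → ℝ × ℝ)
    (ha : ∀ s, a s = (Real.cos (θ s), Real.sin (θ s)))
    (hb : ∀ s, b s = (-Real.sin (θ s), Real.cos (θ s)))
    (ν₁ ν₂ κ : ℝ → ℝ)
    (hν₁ : ∀ s, ν₁ s = dot (deriv r s) (a s))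
    (hν₂ : ∀ s, ν₂ s = dot (deriv r s) (b s))
    (hκ : ∀ s, κ s = deriv θ s)
    (n₁ n₂ m : ℝ → ℝ)
    (hn₁ : ∀ s, n₁ s = deriv (fun x => W (x, ν₂ s, κ s)) (ν₁ s))
    (hn₂ : ∀ s, n₂ s = deriv (fun y => W (ν₁ s, y, κ s)) (ν₂ s))
    (hm : ∀ s, m s = deriv (fun z => W (ν₁ s, ν₂ s, z)) (κ s))
    (aε bε : ℝ → ℝ → ℝ × ℝ)
    (haε : ∀ ε s, aε ε s = (Real.cos (θ s + ε * h_θ s), Real.sin (θ s + ε * h_θ s)))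
    (hbε : ∀ ε s, bε ε s = (-Real.sin (θ s + ε * h_θ s), Real.cos (θ s + ε * h_θ s)))
    (ν₁ε ν₂ε κε : ℝ → ℝ → ℝ)
    (hν₁ε : ∀ ε s, ν₁ε ε s = dot (deriv r s + ε • deriv h_r s) (aε ε s))
    (hν₂ε : ∀ ε s, ν₂ε ε s = dot (deriv r s + ε • deriv h_r s) (bε ε s))
    (hκε : ∀ ε s, κε ε s = deriv θ s + ε * deriv h_θ s)
    (𝒱 : ℝ → ℝ)
    (h𝒱 : ∀ ε, 𝒱 ε = ∫ s in (0:ℝ)..L₀, W (ν₁ε ε s, ν₂ε ε s, κε ε s)) :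
    HasDerivAt 𝒱
      (-∫ s in (0:ℝ)..L₀,
        (dot (deriv (fun t => n₁ t • a t + n₂ t • b t) s) (h_r s)
          + (deriv m s + ν₁ s * n₂ s - ν₂ s * n₁ s) * h_θ s)) 0 := by
  -- basic smoothness of the data
  have hdrC : ContDiff ℝ 1 (deriv r) :=
    (contDiff_succ_iff_deriv.mp (by norm_num [hr] : ContDiff ℝ (1+1) r)).2.2
  have hdθC : ContDiff ℝ 1 (deriv θ) :=
    (contDiff_succ_iff_deriv.mp (by norm_num [hθ] : ContDiff ℝ (1+1) θ)).2.2
  have hθ1 : ContDiff ℝ 1 θ := hθ.of_le one_le_two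
  have hdhr : Continuous (deriv h_r) := (contDiff_one_iff_deriv.mp hhr).2
  have hdhθ : Continuous (deriv h_θ) := (contDiff_one_iff_deriv.mp hhθ).2
  -- strain identifications
  have hν₁V : ∀ s, ν₁ s = Vone r h_r θ h_θ 0 s := fun s => by
    simp [hν₁ s, ha s, dot, Vone]
  have hν₂V : ∀ s, ν₂ s = Vtwo r h_r θ h_θ 0 s := fun s => by
    simp [hν₂ s, hb s, dot, Vtwo]
  -- strains are C¹
  have hcosθ : ContDiff ℝ 1 fun s => Real.cos (θ s) := Real.contDiff_cos.comp (hθ.of_le one_le_two)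
  have hsinθ : ContDiff ℝ 1 fun s => Real.sin (θ s) := Real.contDiff_sin.comp (hθ.of_le one_le_two)
  have hν₁C : ContDiff ℝ 1 ν₁ := by
    have : ν₁ = fun s => (deriv r s).1 * Real.cos (θ s) + (deriv r s).2 * Real.sin (θ s) :=
      funext fun s => by simp [hν₁ s, ha s, dot]
    rw [this]; exact ((contDiff_fst.comp hdrC).mul hcosθ).add ((contDiff_snd.comp hdrC).mul hsinθ)
  have hν₂C : ContDiff ℝ 1 ν₂ := by
    have : ν₂ = fun s => (deriv r s).1 * (-Real.sin (θ s)) + (deriv r s).2 * Real.cos (θ s) :=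
      funext fun s => by simp [hν₂ s, hb s, dot]
    rw [this]; exact ((contDiff_fst.comp hdrC).mul hsinθ.neg).add ((contDiff_snd.comp hdrC).mul hcosθ)
  have hκC : ContDiff ℝ 1 κ := by
    have : κ = deriv θ := funext hκ
    rw [this]; exact hdθC
  -- stresses as directional derivatives of W
  have hWdiff : Differentiable ℝ W := hW.differentiable two_ne_zero
  have hn₁N : ∀ s, n₁ s = (fderiv ℝ W (ν₁ s, ν₂ s, κ s)) (1,0,0) := by
    intro s
    have hg : HasDerivAt (fun x : ℝ => (x, ν₂ s, κ s)) ((1:ℝ),(0:ℝ),(0:ℝ)) (ν₁ s) := by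
      exact (hasDerivAt_id _).prodMk (hasDerivAt_const _ _)
    rw [hn₁ s]
    exact (((hWdiff _).hasFDerivAt).comp_hasDerivAt _ hg).deriv
  have hn₂N : ∀ s, n₂ s = (fderiv ℝ W (ν₁ s, ν₂ s, κ s)) (0,1,0) := by
    intro s
    have hg : HasDerivAt (fun y : ℝ => (ν₁ s, y, κ s)) ((0:ℝ),(1:ℝ),(0:ℝ)) (ν₂ s) := by
      exact (hasDerivAt_const _ _).prodMk ((hasDerivAt_id _).prodMk (hasDerivAt_const _ _))
    rw [hn₂ s]
    exact (((hWdiff _).hasFDerivAt).comp_hasDerivAt _ hg).deriv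
  have hmN : ∀ s, m s = (fderiv ℝ W (ν₁ s, ν₂ s, κ s)) (0,0,1) := by
    intro s
    have hg : HasDerivAt (fun z : ℝ => (ν₁ s, ν₂ s, z)) ((0:ℝ),(0:ℝ),(1:ℝ)) (κ s) := by
      exact (hasDerivAt_const _ _).prodMk ((hasDerivAt_const _ _).prodMk (hasDerivAt_id _))
    rw [hm s]
    exact (((hWdiff _).hasFDerivAt).comp_hasDerivAt _ hg).deriv
  -- stresses are C¹
  have hNC : ContDiff ℝ 1 (fun s => fderiv ℝ W (ν₁ s, ν₂ s, κ s)) :=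
    (hW.fderiv_right (by norm_num)).comp (hν₁C.prodMk (hν₂C.prodMk hκC))
  have hn₁C : ContDiff ℝ 1 n₁ := by
    rw [show n₁ = fun s => (fderiv ℝ W (ν₁ s, ν₂ s, κ s)) (1,0,0) from funext hn₁N]
    exact hNC.clm_apply contDiff_const
  have hn₂C : ContDiff ℝ 1 n₂ := by
    rw [show n₂ = fun s => (fderiv ℝ W (ν₁ s, ν₂ s, κ s)) (0,1,0) from funext hn₂N]
    exact hNC.clm_apply contDiff_const
  have hmC : ContDiff ℝ 1 m := by
    rw [show m = fun s => (fderiv ℝ W (ν₁ s, ν₂ s, κ s)) (0,0,1) from funext hmN]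
    exact hNC.clm_apply contDiff_const
  -- components of the internal force field
  set P₁ : ℝ → ℝ := fun t => n₁ t * Real.cos (θ t) - n₂ t * Real.sin (θ t) with hP₁def
  set P₂ : ℝ → ℝ := fun t => n₁ t * Real.sin (θ t) + n₂ t * Real.cos (θ t) with hP₂def
  have hP₁C : ContDiff ℝ 1 P₁ := by rw [hP₁def]; exact (hn₁C.mul hcosθ).sub (hn₂C.mul hsinθ)
  have hP₂C : ContDiff ℝ 1 P₂ := by rw [hP₂def]; exact (hn₁C.mul hsinθ).add (hn₂C.mul hcosθ)
  have hPeq : (fun t => n₁ t • a t + n₂ t • b t) = fun t => (P₁ t, P₂ t) :=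
    funext fun t => by
      simp only [ha t, hb t, Prod.smul_mk, smul_eq_mul, Prod.mk_add_mk, hP₁def, hP₂def,
        Prod.mk.injEq]
      exact ⟨by ring, trivial⟩
  have hderivP : ∀ s, deriv (fun t => n₁ t • a t + n₂ t • b t) s = (deriv P₁ s, deriv P₂ s) := by
    intro s
    rw [hPeq]
    exact (((hP₁C.differentiable one_ne_zero s).hasDerivAt).prodMk
      ((hP₂C.differentiable one_ne_zero s).hasDerivAt)).deriv
  -- the key derivative via differentiation under the integral
  have hcontFd : Continuous fun p : ℝ × ℝ => Fd W r h_r θ h_θ p.1 p.2 :=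
    continuous_Fd W r h_r θ h_θ hW hr hθ hhr hhθ
  have hcontS : ∀ x : ℝ, Continuous fun s => W (Vone r h_r θ h_θ x s, Vtwo r h_r θ h_θ x s,
      deriv θ s + x * deriv h_θ s) := by
    intro x
    have hdr : Continuous (deriv r) := hdrC.continuous
    have hdθ : Continuous (deriv θ) := hdθC.continuous
    have hWc : Continuous W := hW.continuous
    have hθc : Continuous θ := hθ.continuous
    have hhθc : Continuous h_θ := hhθ.continuous
    unfold Vone Vtwo
    fun_prop
  obtain ⟨C, hC⟩ := (isCompact_Icc.prod isCompact_uIcc).exists_bound_of_continuousOn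
    (s := Icc (-1:ℝ) 1 ×ˢ uIcc (0:ℝ) L₀) hcontFd.continuousOn
  have key : HasDerivAt (fun ε => ∫ s in (0:ℝ)..L₀, W (Vone r h_r θ h_θ ε s,
        Vtwo r h_r θ h_θ ε s, deriv θ s + ε * deriv h_θ s))
      (∫ s in (0:ℝ)..L₀, Fd W r h_r θ h_θ 0 s) 0 := by
    refine (intervalIntegral.hasDerivAt_integral_of_dominated_loc_of_deriv_le
      (F' := fun x s => Fd W r h_r θ h_θ x s) (bound := fun _ => C) (Metric.ball_mem_nhds (0:ℝ) one_pos)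
      (Filter.Eventually.of_forall fun x => ((hcontS x).aestronglyMeasurable)) ?_ ?_ ?_ ?_ ?_).2
    · exact (hcontS 0).intervalIntegrable _ _
    · exact (hcontFd.comp (continuous_const.prodMk continuous_id)).aestronglyMeasurable
    · refine Filter.Eventually.of_forall fun t ht x hx => hC (x, t) ?_
      constructor
      · have := Metric.mem_ball.mp hx
        simp only [dist_zero_right, Real.norm_eq_abs] at this
        exact ⟨neg_le_of_abs_le this.le, le_of_abs_le this.le⟩
      · exact uIoc_subset_uIcc ht
    · exact intervalIntegrable_const
    · exact Filter.Eventually.of_forall fun t ht x hx =>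
        hasDerivAt_W_strains W hW r h_r θ h_θ x t
  -- identify 𝒱 with the explicit family
  have hν₁εV : ∀ ε s, ν₁ε ε s = Vone r h_r θ h_θ ε s := by
    intro ε s
    simp only [hν₁ε, haε, dot, Vone, Prod.fst_add, Prod.snd_add, Prod.smul_fst, Prod.smul_snd,
      smul_eq_mul]
  have hν₂εV : ∀ ε s, ν₂ε ε s = Vtwo r h_r θ h_θ ε s := by
    intro ε s
    simp only [hν₂ε, hbε, dot, Vtwo, Prod.fst_add, Prod.snd_add, Prod.smul_fst, Prod.smul_snd,
      smul_eq_mul]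
    ring
  have hVeq : 𝒱 = fun ε => ∫ s in (0:ℝ)..L₀, W (Vone r h_r θ h_θ ε s, Vtwo r h_r θ h_θ ε s,
      deriv θ s + ε * deriv h_θ s) := funext fun ε => by
    rw [h𝒱 ε]
    congr 1
    funext s
    rw [hν₁εV, hν₂εV, hκε]
  -- value of Fd at ε = 0
  have hFd0 : ∀ s, Fd W r h_r θ h_θ 0 s
      = dVone r h_r θ h_θ 0 s * n₁ s + dVtwo r h_r θ h_θ 0 s * n₂ s + deriv h_θ s * m s := by
    intro s
    have hpt : (Vone r h_r θ h_θ 0 s, Vtwo r h_r θ h_θ 0 s, deriv θ s + 0 * deriv h_θ s)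
        = (ν₁ s, ν₂ s, κ s) := by
      rw [← hν₁V s, ← hν₂V s, hκ s]; norm_num
    unfold Fd
    rw [hpt, clm_expand, ← hn₁N s, ← hn₂N s, ← hmN s]
  -- continuity facts
  have hcP₁ : Continuous (deriv P₁) := (contDiff_one_iff_deriv.mp hP₁C).2
  have hcP₂ : Continuous (deriv P₂) := (contDiff_one_iff_deriv.mp hP₂C).2
  have hcm' : Continuous (deriv m) := (contDiff_one_iff_deriv.mp hmC).2
  have hhrc : Continuous h_r := hhr.continuous
  have hhθc : Continuous h_θ := hhθ.continuous
  have hP₁c : Continuous P₁ := hP₁C.continuous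
  have hP₂c : Continuous P₂ := hP₂C.continuous
  have hmc : Continuous m := hmC.continuous
  have hν₁c : Continuous ν₁ := hν₁C.continuous
  have hν₂c : Continuous ν₂ := hν₂C.continuous
  have hn₁c : Continuous n₁ := hn₁C.continuous
  have hn₂c : Continuous n₂ := hn₂C.continuous
  set g : ℝ → ℝ := fun s => deriv P₁ s * (h_r s).1 + deriv P₂ s * (h_r s).2
    + (deriv m s + ν₁ s * n₂ s - ν₂ s * n₁ s) * h_θ s with hgdef
  have hgc : Continuous g := by rw [hgdef]; fun_prop
  have hFd0c : Continuous (fun s => Fd W r h_r θ h_θ 0 s) :=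
    hcontFd.comp (continuous_const.prodMk continuous_id)
  -- integration by parts pieces
  have hdhr1 : ∀ x : ℝ, HasDerivAt (fun s => (h_r s).1) ((deriv h_r x).1) x := fun x =>
    (ContinuousLinearMap.fst ℝ ℝ ℝ).hasFDerivAt.comp_hasDerivAt x
      ((hhr.differentiable one_ne_zero x).hasDerivAt)
  have hdhr2 : ∀ x : ℝ, HasDerivAt (fun s => (h_r s).2) ((deriv h_r x).2) x := fun x =>
    (ContinuousLinearMap.snd ℝ ℝ ℝ).hasFDerivAt.comp_hasDerivAt x
      ((hhr.differentiable one_ne_zero x).hasDerivAt)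
  have hv1 : ContinuousOn (fun s => (h_r s).1) (uIcc (0:ℝ) L₀) :=
    (continuous_fst.comp hhrc).continuousOn
  have hv2 : ContinuousOn (fun s => (h_r s).2) (uIcc (0:ℝ) L₀) :=
    (continuous_snd.comp hhrc).continuousOn
  have hv1' : IntervalIntegrable (fun s => (deriv h_r s).1) MeasureTheory.volume 0 L₀ :=
    (continuous_fst.comp hdhr).intervalIntegrable _ _
  have hv2' : IntervalIntegrable (fun s => (deriv h_r s).2) MeasureTheory.volume 0 L₀ :=
    (continuous_snd.comp hdhr).intervalIntegrable _ _
  have ibp1 : ∫ s in (0:ℝ)..L₀, (deriv P₁ s * (h_r s).1 + P₁ s * (deriv h_r s).1) = 0 := by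
    rw [integral_deriv_mul_eq_sub_of_hasDerivAt (hP₁c.continuousOn) hv1
      (fun x _ => (hP₁C.differentiable one_ne_zero x).hasDerivAt)
      (fun x _ => hdhr1 x)
      (hcP₁.intervalIntegrable _ _) hv1']
    simp [hr0, hrL]
  have ibp2 : ∫ s in (0:ℝ)..L₀, (deriv P₂ s * (h_r s).2 + P₂ s * (deriv h_r s).2) = 0 := by
    rw [integral_deriv_mul_eq_sub_of_hasDerivAt (hP₂c.continuousOn) hv2
      (fun x _ => (hP₂C.differentiable one_ne_zero x).hasDerivAt)
      (fun x _ => hdhr2 x)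
      (hcP₂.intervalIntegrable _ _) hv2']
    simp [hr0, hrL]
  have ibp3 : ∫ s in (0:ℝ)..L₀, (deriv m s * h_θ s + m s * deriv h_θ s) = 0 := by
    rw [integral_deriv_mul_eq_sub_of_hasDerivAt (hmc.continuousOn) (hhθc.continuousOn)
      (fun x _ => (hmC.differentiable one_ne_zero x).hasDerivAt)
      (fun x _ => (hhθ.differentiable one_ne_zero x).hasDerivAt)
      (hcm'.intervalIntegrable _ _) (hdhθ.intervalIntegrable _ _)]
    simp [hθ0, hθL]
  -- the pointwise identity behind integration by parts
  have hsum : (fun s => g s + Fd W r h_r θ h_θ 0 s)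
      = fun s => (deriv P₁ s * (h_r s).1 + P₁ s * (deriv h_r s).1)
        + ((deriv P₂ s * (h_r s).2 + P₂ s * (deriv h_r s).2)
          + (deriv m s * h_θ s + m s * deriv h_θ s)) := funext fun s => by
    rw [hFd0 s]
    have e1 : n₁ s * Real.cos (θ s) - n₂ s * Real.sin (θ s) = P₁ s := by rw [hP₁def]
    have e2 : n₁ s * Real.sin (θ s) + n₂ s * Real.cos (θ s) = P₂ s := by rw [hP₂def]
    simp only [hgdef, dVone, dVtwo, zero_mul, add_zero]
    rw [← hν₁V s, ← hν₂V s]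
    linear_combination (deriv h_r s).1 * e1 + (deriv h_r s).2 * e2
  have hzero : (∫ s in (0:ℝ)..L₀, g s) + (∫ s in (0:ℝ)..L₀, Fd W r h_r θ h_θ 0 s) = 0 := by
    have hA : Continuous fun s => deriv P₁ s * (h_r s).1 + P₁ s * (deriv h_r s).1 := by fun_prop
    have hB : Continuous fun s => deriv P₂ s * (h_r s).2 + P₂ s * (deriv h_r s).2 := by fun_prop
    have hCc : Continuous fun s => deriv m s * h_θ s + m s * deriv h_θ s := by fun_prop
    rw [← intervalIntegral.integral_add (hgc.intervalIntegrable _ _)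
      (hFd0c.intervalIntegrable _ _), hsum,
      intervalIntegral.integral_add (hA.intervalIntegrable _ _)
        (by exact (hB.add hCc).intervalIntegrable _ _ : IntervalIntegrable (fun s =>
          (deriv P₂ s * (h_r s).2 + P₂ s * (deriv h_r s).2)
            + (deriv m s * h_θ s + m s * deriv h_θ s)) volume 0 L₀),
      intervalIntegral.integral_add (hB.intervalIntegrable _ _) (hCc.intervalIntegrable _ _),
      ibp1, ibp2, ibp3]
    ring
  -- assemble
  have hcongr : (∫ s in (0:ℝ)..L₀,
      (dot (deriv (fun t => n₁ t • a t + n₂ t • b t) s) (h_r s)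
        + (deriv m s + ν₁ s * n₂ s - ν₂ s * n₁ s) * h_θ s)) = ∫ s in (0:ℝ)..L₀, g s := by
    apply intervalIntegral.integral_congr
    intro s _
    show dot (deriv (fun t => n₁ t • a t + n₂ t • b t) s) (h_r s)
      + (deriv m s + ν₁ s * n₂ s - ν₂ s * n₁ s) * h_θ s = g s
    rw [hderivP s]
    simp [dot, hgdef]
  rw [hVeq, hcongr, show (-∫ s in (0:ℝ)..L₀, g s)
    = ∫ s in (0:ℝ)..L₀, Fd W r h_r θ h_θ 0 s by linarith]
  exact key
end

section
/- Let W^m : ℝ³ → ℝ be twice continuously differentiable (a muscle stored energy function), let u : [0, L₀] → ℝ be continuously differentiable (a fixed muscle activation), let r, θ be twice continuously differentiable on [0, L₀], and let h_r : [0, L₀] → ℝ², h_θ : [0, L₀] → ℝ be continuously differentiable with h_r(0) = h_r(L₀) = 0 and h_θ(0) = h_θ(L₀) = 0. Define the muscle stresses n₁^m(s) = ∂W^m/∂ν₁(w(s)), n₂^m(s) = ∂W^m/∂ν₂(w(s)), m^m(s) = ∂W^m/∂κ(w(s)), where w(s) are the strains of (r, θ). Then the muscle potential energy 𝒱^m(ε)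 = ∫₀^{L₀} u(s) W^m(ν₁^ε(s), ν₂^ε(s), κ^ε(s)) ds of the perturbed configuration (r + ε h_r, θ + ε h_θ) is differentiable at ε = 0 with 𝒱^m′(0) = −∫₀^{L₀} [ ⟨ d/ds ( u(s)(n₁^m(s)𝖺(s) + n₂^m(s)𝖻(s)) ), h_r(s) ⟩ + ( (u·m^m)′(s) + ν₁(s) u(s) n₂^m(s) − ν₂(s) u(s) n₁^m(s) ) h_θ(s) ] ds. That is, the muscle force operator 𝖦^m(q)u^m equals the negative variational gradient −δ𝒱^m/δq of the muscle potential energy. -/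
lemma slice_deriv₁ (f : ℝ × ℝ × ℝ → ℝ) (hf : Differentiable ℝ f) (x c d : ℝ) :
    deriv (fun t => f (t, c, d)) x = fderiv ℝ f (x, c, d) (1, 0, 0) := by
  have h1 : HasDerivAt (fun t : ℝ => (t, c, d)) ((1:ℝ), (0:ℝ), (0:ℝ)) x :=
    (hasDerivAt_id x).prodMk ((hasDerivAt_const x c).prodMk (hasDerivAt_const x d))
  exact ((hf (x, c, d)).hasFDerivAt.comp_hasDerivAt x h1).deriv

lemma slice_deriv₂ (f : ℝ × ℝ × ℝ → ℝ) (hf : Differentiable ℝ f) (x c d : ℝ) :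
    deriv (fun t => f (c, t, d)) x = fderiv ℝ f (c, x, d) (0, 1, 0) := by
  have h1 : HasDerivAt (fun t : ℝ => (c, t, d)) ((0:ℝ), (1:ℝ), (0:ℝ)) x :=
    (hasDerivAt_const x c).prodMk ((hasDerivAt_id x).prodMk (hasDerivAt_const x d))
  exact ((hf (c, x, d)).hasFDerivAt.comp_hasDerivAt x h1).deriv

lemma slice_deriv₃ (f : ℝ × ℝ × ℝ → ℝ) (hf : Differentiable ℝ f) (x c d : ℝ) :
    deriv (fun t => f (c, d, t)) x = fderiv ℝ f (c, d, x) (0, 0, 1) := by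
  have h1 : HasDerivAt (fun t : ℝ => (c, d, t)) ((0:ℝ), (0:ℝ), (1:ℝ)) x :=
    (hasDerivAt_const x c).prodMk ((hasDerivAt_const x d).prodMk (hasDerivAt_id x))
  exact ((hf (c, d, x)).hasFDerivAt.comp_hasDerivAt x h1).deriv

lemma clm_triple_apply (L : ℝ × ℝ × ℝ →L[ℝ] ℝ) (A B C : ℝ) :
    L (A, B, C) = A * L (1, 0, 0) + B * L (0, 1, 0) + C * L (0, 0, 1) := by
  have h : (A, B, C) = A • ((1:ℝ), (0:ℝ), (0:ℝ)) + B • ((0:ℝ), (1:ℝ), (0:ℝ))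
      + C • ((0:ℝ), (0:ℝ), (1:ℝ)) := by
    simp [Prod.ext_iff]
  rw [h, L.map_add, L.map_add, L.map_smul, L.map_smul, L.map_smul]
  simp [smul_eq_mul]

lemma hasDerivAt_fst' {G : ℝ → ℝ × ℝ} {g : ℝ × ℝ} {s : ℝ} (h : HasDerivAt G g s) :
    HasDerivAt (fun t => (G t).1) g.1 s := (hasFDerivAt_fst (p := G s)).comp_hasDerivAt s h

lemma hasDerivAt_snd' {G : ℝ → ℝ × ℝ} {g : ℝ × ℝ} {s : ℝ} (h : HasDerivAt G g s) :
    HasDerivAt (fun t => (G t).2) g.2 s := (hasFDerivAt_snd (p := G s)).comp_hasDerivAt s h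

/-- The muscle force operator 𝖦^m(q)u^m equals the negative
variational gradient −δ𝒱^m/δq of the muscle potential energy
𝒱^m = ∫₀^{L₀} u(s) W^m(ν₁, ν₂, κ) ds: for variations (h_r, h_θ) vanishing
at both endpoints, the first variation of 𝒱^m at ε = 0 is minus the integral
of the distributed force ∂ₛ(u(n₁^m𝖺 + n₂^m𝖻)) paired with h_r plus the
couple ∂ₛ(u m^m) + ν₁ u n₂^m − ν₂ u n₁^m paired with h_θ. -/
theorem muscle_energy_first_variation
    (L₀ : ℝ) (hL : 0 < L₀)
    (Wm : ℝ × ℝ × ℝ → ℝ) (hWm : ContDiff ℝ 2 Wm)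
    (u : ℝ → ℝ) (hu : ContDiff ℝ 1 u)
    (r : ℝ → ℝ × ℝ) (θ : ℝ → ℝ) (hr : ContDiff ℝ 2 r) (hθ : ContDiff ℝ 2 θ)
    (h_r : ℝ → ℝ × ℝ) (h_θ : ℝ → ℝ) (hhr : ContDiff ℝ 1 h_r) (hhθ : ContDiff ℝ 1 h_θ)
    (hr0 : h_r 0 = 0) (hrL : h_r L₀ = 0) (hθ0 : h_θ 0 = 0) (hθL : h_θ L₀ = 0)
    (a b : ℝ → ℝ × ℝ)
    (ha : ∀ s, a s = (Real.cos (θ s), Real.sin (θ s)))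
    (hb : ∀ s, b s = (-Real.sin (θ s), Real.cos (θ s)))
    (ν₁ ν₂ κ : ℝ → ℝ)
    (hν₁ : ∀ s, ν₁ s = dot (deriv r s) (a s))
    (hν₂ : ∀ s, ν₂ s = dot (deriv r s) (b s))
    (hκ : ∀ s, κ s = deriv θ s)
    (n₁m n₂m mm : ℝ → ℝ)
    (hn₁m : ∀ s, n₁m s = deriv (fun x => Wm (x, ν₂ s, κ s)) (ν₁ s))
    (hn₂m : ∀ s, n₂m s = deriv (fun y => Wm (ν₁ s, y, κ s)) (ν₂ s))
    (hmm : ∀ s, mm s = deriv (fun z => Wm (ν₁ s, ν₂ s, z)) (κ s))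
    (aε bε : ℝ → ℝ → ℝ × ℝ)
    (haε : ∀ ε s, aε ε s = (Real.cos (θ s + ε * h_θ s), Real.sin (θ s + ε * h_θ s)))
    (hbε : ∀ ε s, bε ε s = (-Real.sin (θ s + ε * h_θ s), Real.cos (θ s + ε * h_θ s)))
    (ν₁ε ν₂ε κε : ℝ → ℝ → ℝ)
    (hν₁ε : ∀ ε s, ν₁ε ε s = dot (deriv r s + ε • deriv h_r s) (aε ε s))
    (hν₂ε : ∀ ε s, ν₂ε ε s = dot (deriv r s + ε • deriv h_r s) (bε ε s))
    (hκε : ∀ ε s, κε ε s = deriv θ s + ε * deriv h_θ s)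
    (𝒱m : ℝ → ℝ)
    (h𝒱m : ∀ ε, 𝒱m ε = ∫ s in (0:ℝ)..L₀, u s * Wm (ν₁ε ε s, ν₂ε ε s, κε ε s)) :
    HasDerivAt 𝒱m
      (-∫ s in (0:ℝ)..L₀,
        (dot (deriv (fun t => u t • (n₁m t • a t + n₂m t • b t)) s) (h_r s)
          + (deriv (fun t => u t * mm t) s
              + ν₁ s * (u s * n₂m s) - ν₂ s * (u s * n₁m s)) * h_θ s)) 0 := by
  -- basic regularity
  have hWd : Differentiable ℝ Wm := hWm.differentiable two_ne_zero
  have hr2 : ContDiff ℝ ((1:ℕ) + 1) r := by exact_mod_cast hr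
  have hθ2 : ContDiff ℝ ((1:ℕ) + 1) θ := by exact_mod_cast hθ
  have hdr : ContDiff ℝ 1 (deriv r) := (contDiff_succ_iff_deriv.mp hr2).2.2
  have hdθ : ContDiff ℝ 1 (deriv θ) := (contDiff_succ_iff_deriv.mp hθ2).2.2
  have hdhr : Continuous (deriv h_r) := hhr.continuous_deriv le_rfl
  have hdhθ : Continuous (deriv h_θ) := hhθ.continuous_deriv le_rfl
  -- explicit formulas for perturbed strains
  have hν₁εf : ∀ x s, ν₁ε x s =
      ((deriv r s).1 + x * (deriv h_r s).1) * Real.cos (θ s + x * h_θ s) +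
      ((deriv r s).2 + x * (deriv h_r s).2) * Real.sin (θ s + x * h_θ s) := by
    intro x s; rw [hν₁ε, haε]; simp [dot, smul_eq_mul]
  have hν₂εf : ∀ x s, ν₂ε x s =
      ((deriv r s).1 + x * (deriv h_r s).1) * (-Real.sin (θ s + x * h_θ s)) +
      ((deriv r s).2 + x * (deriv h_r s).2) * Real.cos (θ s + x * h_θ s) := by
    intro x s; rw [hν₂ε, hbε]; simp [dot, smul_eq_mul]
  -- strains as nice functions
  have hν₁f : ν₁ = fun s => (deriv r s).1 * Real.cos (θ s) + (deriv r s).2 * Real.sin (θ s) := by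
    funext s; rw [hν₁, ha]; simp [dot]
  have hν₂f : ν₂ = fun s => (deriv r s).1 * (-Real.sin (θ s)) + (deriv r s).2 * Real.cos (θ s) := by
    funext s; rw [hν₂, hb]; simp [dot]
  have hκf : κ = deriv θ := funext hκ
  have hcθ1 : ContDiff ℝ 1 θ := hθ.of_le one_le_two
  have hccos : ContDiff ℝ 1 fun s => Real.cos (θ s) := Real.contDiff_cos.comp hcθ1
  have hcsin : ContDiff ℝ 1 fun s => Real.sin (θ s) := Real.contDiff_sin.comp hcθ1
  have hdr1 : ContDiff ℝ 1 fun s => (deriv r s).1 := contDiff_fst.comp hdr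
  have hdr2 : ContDiff ℝ 1 fun s => (deriv r s).2 := contDiff_snd.comp hdr
  have hcν₁ : ContDiff ℝ 1 ν₁ := by rw [hν₁f]; exact (hdr1.mul hccos).add (hdr2.mul hcsin)
  have hcν₂ : ContDiff ℝ 1 ν₂ := by rw [hν₂f]; exact (hdr1.mul hcsin.neg).add (hdr2.mul hccos)
  have hcκ : ContDiff ℝ 1 κ := by rw [hκf]; exact hdθ
  have hw : ContDiff ℝ 1 (fun s => (ν₁ s, ν₂ s, κ s)) := hcν₁.prodMk (hcν₂.prodMk hcκ)
  -- stresses via fderiv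
  have hn₁p : ∀ s, n₁m s = fderiv ℝ Wm (ν₁ s, ν₂ s, κ s) (1, 0, 0) := fun s => by
    rw [hn₁m, slice_deriv₁ Wm hWd]
  have hn₂p : ∀ s, n₂m s = fderiv ℝ Wm (ν₁ s, ν₂ s, κ s) (0, 1, 0) := fun s => by
    rw [hn₂m, slice_deriv₂ Wm hWd]
  have hmmp : ∀ s, mm s = fderiv ℝ Wm (ν₁ s, ν₂ s, κ s) (0, 0, 1) := fun s => by
    rw [hmm, slice_deriv₃ Wm hWd]
  have hn₁f : n₁m = fun s => fderiv ℝ Wm (ν₁ s, ν₂ s, κ s) (1, 0, 0) := funext hn₁p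
  have hn₂f : n₂m = fun s => fderiv ℝ Wm (ν₁ s, ν₂ s, κ s) (0, 1, 0) := funext hn₂p
  have hmmf : mm = fun s => fderiv ℝ Wm (ν₁ s, ν₂ s, κ s) (0, 0, 1) := funext hmmp
  have hfd : ContDiff ℝ 1 (fderiv ℝ Wm) := hWm.fderiv_right le_rfl
  have hcn₁ : ContDiff ℝ 1 n₁m := by
    rw [hn₁f]; exact (hfd.comp hw).clm_apply contDiff_const
  have hcn₂ : ContDiff ℝ 1 n₂m := by
    rw [hn₂f]; exact (hfd.comp hw).clm_apply contDiff_const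
  have hcmm : ContDiff ℝ 1 mm := by
    rw [hmmf]; exact (hfd.comp hw).clm_apply contDiff_const
  -- the candidate derivative integrand
  set F' : ℝ → ℝ → ℝ := fun x s => u s * (fderiv ℝ Wm (ν₁ε x s, ν₂ε x s, κε x s))
      (dot (deriv h_r s) (aε x s) + h_θ s * ν₂ε x s,
       dot (deriv h_r s) (bε x s) - h_θ s * ν₁ε x s,
       deriv h_θ s) with hF'def
  -- joint continuity
  have hcΦ : Continuous fun p : ℝ × ℝ => (ν₁ε p.1 p.2, ν₂ε p.1 p.2, κε p.1 p.2) := by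
    simp only [hν₁εf, hν₂εf, hκε]
    have c1 : Continuous fun p : ℝ × ℝ => θ p.2 + p.1 * h_θ p.2 := by
      exact (hθ.continuous.comp continuous_snd).add
        (continuous_fst.mul (hhθ.continuous.comp continuous_snd))
    have c2 : Continuous fun p : ℝ × ℝ => (deriv r p.2).1 + p.1 * (deriv h_r p.2).1 :=
      (continuous_fst.comp (hdr.continuous.comp continuous_snd)).add
        (continuous_fst.mul (continuous_fst.comp (hdhr.comp continuous_snd)))
    have c3 : Continuous fun p : ℝ × ℝ => (deriv r p.2).2 + p.1 * (deriv h_r p.2).2 :=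
      (continuous_snd.comp (hdr.continuous.comp continuous_snd)).add
        (continuous_fst.mul (continuous_snd.comp (hdhr.comp continuous_snd)))
    exact ((c2.mul (Real.continuous_cos.comp c1)).add
        (c3.mul (Real.continuous_sin.comp c1))).prodMk
      (((c2.mul ((Real.continuous_sin.comp c1).neg)).add
        (c3.mul (Real.continuous_cos.comp c1))).prodMk
      ((hdθ.continuous.comp continuous_snd).add
        (continuous_fst.mul (hdhθ.comp continuous_snd))))
  have hcν₁ε : Continuous fun p : ℝ × ℝ => ν₁ε p.1 p.2 :=
    (continuous_fst.comp hcΦ)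
  have hcν₂ε : Continuous fun p : ℝ × ℝ => ν₂ε p.1 p.2 :=
    (continuous_fst.comp (continuous_snd.comp hcΦ))
  have hcaε : Continuous fun p : ℝ × ℝ => aε p.1 p.2 := by
    simp only [haε]
    have c1 : Continuous fun p : ℝ × ℝ => θ p.2 + p.1 * h_θ p.2 :=
      (hθ.continuous.comp continuous_snd).add
        (continuous_fst.mul (hhθ.continuous.comp continuous_snd))
    exact (Real.continuous_cos.comp c1).prodMk (Real.continuous_sin.comp c1)
  have hcbε : Continuous fun p : ℝ × ℝ => bε p.1 p.2 := by
    simp only [hbε]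
    have c1 : Continuous fun p : ℝ × ℝ => θ p.2 + p.1 * h_θ p.2 :=
      (hθ.continuous.comp continuous_snd).add
        (continuous_fst.mul (hhθ.continuous.comp continuous_snd))
    exact ((Real.continuous_sin.comp c1).neg).prodMk (Real.continuous_cos.comp c1)
  have hcV : Continuous fun p : ℝ × ℝ =>
      ((dot (deriv h_r p.2) (aε p.1 p.2) + h_θ p.2 * ν₂ε p.1 p.2,
        dot (deriv h_r p.2) (bε p.1 p.2) - h_θ p.2 * ν₁ε p.1 p.2,
        deriv h_θ p.2) : ℝ × ℝ × ℝ) := by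
    have cdhr := hdhr.comp (continuous_snd : Continuous fun p : ℝ × ℝ => p.2)
    have chθ := hhθ.continuous.comp (continuous_snd : Continuous fun p : ℝ × ℝ => p.2)
    simp only [dot]
    exact (((continuous_fst.comp cdhr).mul (continuous_fst.comp hcaε)).add
        ((continuous_snd.comp cdhr).mul (continuous_snd.comp hcaε))).add
        (chθ.mul hcν₂ε) |>.prodMk
      ((((continuous_fst.comp cdhr).mul (continuous_fst.comp hcbε)).add
        ((continuous_snd.comp cdhr).mul (continuous_snd.comp hcbε))).sub
        (chθ.mul hcν₁ε) |>.prodMk (hdhθ.comp continuous_snd))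
  have hcF' : Continuous fun p : ℝ × ℝ => F' p.1 p.2 := by
    rw [hF'def]
    exact (hu.continuous.comp continuous_snd).mul
      (((hWm.continuous_fderiv two_ne_zero).comp hcΦ).clm_apply hcV)
  -- pointwise differentiability in ε
  have hdiff : ∀ s x : ℝ, HasDerivAt (fun y => u s * Wm (ν₁ε y s, ν₂ε y s, κε y s)) (F' x s) x := by
    intro s x
    have hθε : HasDerivAt (fun y : ℝ => θ s + y * h_θ s) (h_θ s) x := by
      simpa using ((hasDerivAt_id x).mul_const (h_θ s)).const_add (θ s)
    have hcosε : HasDerivAt (fun y => Real.cos (θ s + y * h_θ s))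
        (-Real.sin (θ s + x * h_θ s) * h_θ s) x := (Real.hasDerivAt_cos _).comp x hθε
    have hsinε : HasDerivAt (fun y => Real.sin (θ s + y * h_θ s))
        (Real.cos (θ s + x * h_θ s) * h_θ s) x := (Real.hasDerivAt_sin _).comp x hθε
    have hl1 : HasDerivAt (fun y : ℝ => (deriv r s).1 + y * (deriv h_r s).1)
        ((deriv h_r s).1) x := by
      simpa using ((hasDerivAt_id x).mul_const ((deriv h_r s).1)).const_add ((deriv r s).1)
    have hl2 : HasDerivAt (fun y : ℝ => (deriv r s).2 + y * (deriv h_r s).2)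
        ((deriv h_r s).2) x := by
      simpa using ((hasDerivAt_id x).mul_const ((deriv h_r s).2)).const_add ((deriv r s).2)
    have hd1 : HasDerivAt (fun y => ν₁ε y s)
        (dot (deriv h_r s) (aε x s) + h_θ s * ν₂ε x s) x := by
      simp only [hν₁εf]
      refine HasDerivAt.congr_deriv ((hl1.mul hcosε).add (hl2.mul hsinε)) ?_
      simp only [dot, haε, hν₂εf]
      ring
    have hd2 : HasDerivAt (fun y => ν₂ε y s)
        (dot (deriv h_r s) (bε x s) - h_θ s * ν₁ε x s) x := by
      simp only [hν₂εf]
      refine HasDerivAt.congr_deriv ((hl1.mul hsinε.neg).add (hl2.mul hcosε)) ?_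
      simp only [dot, hbε, hν₁εf, Pi.neg_apply]
      ring
    have hd3 : HasDerivAt (fun y => κε y s) (deriv h_θ s) x := by
      simp only [hκε]
      simpa using ((hasDerivAt_id x).mul_const (deriv h_θ s)).const_add (deriv θ s)
    have hΦd := hd1.prodMk (hd2.prodMk hd3)
    have := ((hWd _).hasFDerivAt.comp_hasDerivAt x hΦd).const_mul (u s)
    exact this
  -- joint continuity of the original integrand
  have hcF : Continuous fun p : ℝ × ℝ => u p.2 * Wm (ν₁ε p.1 p.2, ν₂ε p.1 p.2, κε p.1 p.2) :=
    (hu.continuous.comp continuous_snd).mul (hWm.continuous.comp hcΦ)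
  -- bound on a compact
  obtain ⟨C, hC⟩ := (isCompact_Icc.prod isCompact_uIcc).exists_bound_of_continuousOn
    (s := Set.Icc (-1:ℝ) 1 ×ˢ Set.uIcc (0:ℝ) L₀) hcF'.continuousOn
  have hmeas : ∀ᶠ x in nhds (0:ℝ), MeasureTheory.AEStronglyMeasurable
      (fun s => u s * Wm (ν₁ε x s, ν₂ε x s, κε x s))
      (MeasureTheory.volume.restrict (Set.uIoc (0:ℝ) L₀)) := by
    refine Filter.Eventually.of_forall (fun x => ?_)
    exact ((hcF.comp (continuous_const.prodMk continuous_id)).aestronglyMeasurable).restrict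
  have hFint : IntervalIntegrable (fun s => u s * Wm (ν₁ε 0 s, ν₂ε 0 s, κε 0 s))
      MeasureTheory.volume 0 L₀ :=
    ((hcF.comp (continuous_const.prodMk continuous_id)) :).intervalIntegrable 0 L₀
  have hF'meas : MeasureTheory.AEStronglyMeasurable (F' 0)
      (MeasureTheory.volume.restrict (Set.uIoc (0:ℝ) L₀)) :=
    ((hcF'.comp (continuous_const.prodMk continuous_id)).aestronglyMeasurable).restrict
  have hbound : ∀ᵐ t ∂MeasureTheory.volume, t ∈ Set.uIoc (0:ℝ) L₀ →
      ∀ x ∈ Metric.ball (0:ℝ) 1, ‖F' x t‖ ≤ C := by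
    refine Filter.Eventually.of_forall (fun t ht x hx => ?_)
    have hx1 : |x| ≤ 1 := by
      have := mem_ball_zero_iff.mp hx
      rw [Real.norm_eq_abs] at this
      exact this.le
    exact hC (x, t) ⟨abs_le.mp hx1, Set.uIoc_subset_uIcc ht⟩
  have hdiff' : ∀ᵐ t ∂MeasureTheory.volume, t ∈ Set.uIoc (0:ℝ) L₀ →
      ∀ x ∈ Metric.ball (0:ℝ) 1,
        HasDerivAt (fun y => u t * Wm (ν₁ε y t, ν₂ε y t, κε y t)) (F' x t) x :=
    Filter.Eventually.of_forall (fun t _ x _ => hdiff t x)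
  have hmain := (intervalIntegral.hasDerivAt_integral_of_dominated_loc_of_deriv_le
    (Metric.ball_mem_nhds 0 one_pos) hmeas hFint hF'meas hbound (intervalIntegrable_const) hdiff')
  have hF'0int : IntervalIntegrable (F' 0) MeasureTheory.volume 0 L₀ := hmain.1
  have hderiv : HasDerivAt (fun x => ∫ s in (0:ℝ)..L₀, u s * Wm (ν₁ε x s, ν₂ε x s, κε x s))
      (∫ s in (0:ℝ)..L₀, F' 0 s) 0 := hmain.2
  -- the components of the distributed force
  set G₁ : ℝ → ℝ := fun t => u t * (n₁m t * Real.cos (θ t) + n₂m t * (-Real.sin (θ t)))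
    with hG₁def
  set G₂ : ℝ → ℝ := fun t => u t * (n₁m t * Real.sin (θ t) + n₂m t * Real.cos (θ t))
    with hG₂def
  have hcG₁ : ContDiff ℝ 1 G₁ := hu.mul ((hcn₁.mul hccos).add (hcn₂.mul hcsin.neg))
  have hcG₂ : ContDiff ℝ 1 G₂ := hu.mul ((hcn₁.mul hcsin).add (hcn₂.mul hccos))
  have hcM : ContDiff ℝ 1 (fun t => u t * mm t) := hu.mul hcmm
  have hGpair : (fun t => u t • (n₁m t • a t + n₂m t • b t)) = fun t => (G₁ t, G₂ t) := by
    funext t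
    rw [ha, hb]
    simp [hG₁def, hG₂def, Prod.ext_iff, smul_eq_mul]
  have hderivG : ∀ s, deriv (fun t => u t • (n₁m t • a t + n₂m t • b t)) s
      = (deriv G₁ s, deriv G₂ s) := by
    intro s
    rw [hGpair]
    exact (((hcG₁.differentiable one_ne_zero s).hasDerivAt).prodMk
      ((hcG₂.differentiable one_ne_zero s).hasDerivAt)).deriv
  have hd_h1 : ∀ s, deriv (fun t => (h_r t).1) s = (deriv h_r s).1 := fun s =>
    (hasDerivAt_fst' ((hhr.differentiable one_ne_zero s).hasDerivAt)).deriv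
  have hd_h2 : ∀ s, deriv (fun t => (h_r t).2) s = (deriv h_r s).2 := fun s =>
    (hasDerivAt_snd' ((hhr.differentiable one_ne_zero s).hasDerivAt)).deriv
  -- value of F' at ε = 0
  have hF'0 : ∀ s, F' 0 s =
      G₁ s * (deriv h_r s).1 + G₂ s * (deriv h_r s).2 + u s * mm s * deriv h_θ s
        + (ν₂ s * (u s * n₁m s) - ν₁ s * (u s * n₂m s)) * h_θ s := by
    intro s
    have e1 : ν₁ε 0 s = ν₁ s := by rw [hν₁εf, hν₁f]; simp
    have e2 : ν₂ε 0 s = ν₂ s := by rw [hν₂εf, hν₂f]; simp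
    have e3 : κε 0 s = κ s := by rw [hκε, hκ]; simp
    simp only [hF'def]
    rw [e1, e2, e3, clm_triple_apply]
    simp only [hG₁def, hG₂def, haε, hbε, dot, zero_mul, add_zero]
    rw [hn₁p s, hn₂p s, hmmp s]
    ring
  -- integration by parts pieces
  have hch1 : ContDiff ℝ 1 (fun t => (h_r t).1) := contDiff_fst.comp hhr
  have hch2 : ContDiff ℝ 1 (fun t => (h_r t).2) := contDiff_snd.comp hhr
  have ibp1 : ∫ s in (0:ℝ)..L₀,
      (deriv G₁ s * (h_r s).1 + G₁ s * deriv (fun t => (h_r t).1) s) = 0 := by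
    rw [intervalIntegral.integral_deriv_mul_eq_sub
      (fun x _ => (hcG₁.differentiable one_ne_zero x).hasDerivAt)
      (fun x _ => (hch1.differentiable one_ne_zero x).hasDerivAt)
      ((hcG₁.continuous_deriv le_rfl).intervalIntegrable 0 L₀)
      ((hch1.continuous_deriv le_rfl).intervalIntegrable 0 L₀)]
    simp [hrL, hr0]
  have ibp2 : ∫ s in (0:ℝ)..L₀,
      (deriv G₂ s * (h_r s).2 + G₂ s * deriv (fun t => (h_r t).2) s) = 0 := by
    rw [intervalIntegral.integral_deriv_mul_eq_sub
      (fun x _ => (hcG₂.differentiable one_ne_zero x).hasDerivAt)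
      (fun x _ => (hch2.differentiable one_ne_zero x).hasDerivAt)
      ((hcG₂.continuous_deriv le_rfl).intervalIntegrable 0 L₀)
      ((hch2.continuous_deriv le_rfl).intervalIntegrable 0 L₀)]
    simp [hrL, hr0]
  have ibp3 : ∫ s in (0:ℝ)..L₀,
      (deriv (fun t => u t * mm t) s * h_θ s + u s * mm s * deriv h_θ s) = 0 := by
    have := intervalIntegral.integral_deriv_mul_eq_sub (a := 0) (b := L₀)
      (u := fun t => u t * mm t) (v := h_θ)
      (u' := deriv (fun t => u t * mm t)) (v' := deriv h_θ)
      (fun x _ => (hcM.differentiable one_ne_zero x).hasDerivAt)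
      (fun x _ => (hhθ.differentiable one_ne_zero x).hasDerivAt)
      ((hcM.continuous_deriv le_rfl).intervalIntegrable 0 L₀)
      (hdhθ.intervalIntegrable 0 L₀)
    simpa [hθ0, hθL] using this
  -- integrabilities
  have hi1 : IntervalIntegrable
      (fun s => deriv G₁ s * (h_r s).1 + G₁ s * deriv (fun t => (h_r t).1) s)
      MeasureTheory.volume 0 L₀ :=
    (((hcG₁.continuous_deriv le_rfl).mul (continuous_fst.comp hhr.continuous)).add
      (hcG₁.continuous.mul (hch1.continuous_deriv le_rfl))).intervalIntegrable 0 L₀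
  have hi2 : IntervalIntegrable
      (fun s => deriv G₂ s * (h_r s).2 + G₂ s * deriv (fun t => (h_r t).2) s)
      MeasureTheory.volume 0 L₀ :=
    (((hcG₂.continuous_deriv le_rfl).mul (continuous_snd.comp hhr.continuous)).add
      (hcG₂.continuous.mul (hch2.continuous_deriv le_rfl))).intervalIntegrable 0 L₀
  have hi3 : IntervalIntegrable
      (fun s => deriv (fun t => u t * mm t) s * h_θ s + u s * mm s * deriv h_θ s)
      MeasureTheory.volume 0 L₀ :=
    (((hcM.continuous_deriv le_rfl).mul hhθ.continuous).add
      ((hu.continuous.mul hcmm.continuous).mul hdhθ)).intervalIntegrable 0 L₀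
  -- pointwise value of the statement integrand
  have hPval : ∀ s, (dot (deriv (fun t => u t • (n₁m t • a t + n₂m t • b t)) s) (h_r s)
      + (deriv (fun t => u t * mm t) s
          + ν₁ s * (u s * n₂m s) - ν₂ s * (u s * n₁m s)) * h_θ s)
      = deriv G₁ s * (h_r s).1 + deriv G₂ s * (h_r s).2
        + (deriv (fun t => u t * mm t) s
            + ν₁ s * (u s * n₂m s) - ν₂ s * (u s * n₁m s)) * h_θ s := by
    intro s
    rw [hderivG]
    simp [dot]
  have hPint : IntervalIntegrable
      (fun s => dot (deriv (fun t => u t • (n₁m t • a t + n₂m t • b t)) s) (h_r s)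
        + (deriv (fun t => u t * mm t) s
            + ν₁ s * (u s * n₂m s) - ν₂ s * (u s * n₁m s)) * h_θ s)
      MeasureTheory.volume 0 L₀ := by
    rw [funext hPval]
    refine Continuous.intervalIntegrable ?_ 0 L₀
    refine (((hcG₁.continuous_deriv le_rfl).mul (continuous_fst.comp hhr.continuous)).add
      ((hcG₂.continuous_deriv le_rfl).mul (continuous_snd.comp hhr.continuous))).add
      (Continuous.mul ?_ hhθ.continuous)
    exact ((hcM.continuous_deriv le_rfl).add
      (hcν₁.continuous.mul (hu.continuous.mul hcn₂.continuous))).sub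
      (hcν₂.continuous.mul (hu.continuous.mul hcn₁.continuous))
  -- combine
  have hsum : (∫ s in (0:ℝ)..L₀, F' 0 s)
      + (∫ s in (0:ℝ)..L₀,
          (dot (deriv (fun t => u t • (n₁m t • a t + n₂m t • b t)) s) (h_r s)
            + (deriv (fun t => u t * mm t) s
                + ν₁ s * (u s * n₂m s) - ν₂ s * (u s * n₁m s)) * h_θ s)) = 0 := by
    rw [← intervalIntegral.integral_add hF'0int hPint]
    have heq : ∀ s, F' 0 s
        + (dot (deriv (fun t => u t • (n₁m t • a t + n₂m t • b t)) s) (h_r s)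
            + (deriv (fun t => u t * mm t) s
                + ν₁ s * (u s * n₂m s) - ν₂ s * (u s * n₁m s)) * h_θ s)
        = (deriv G₁ s * (h_r s).1 + G₁ s * deriv (fun t => (h_r t).1) s)
          + ((deriv G₂ s * (h_r s).2 + G₂ s * deriv (fun t => (h_r t).2) s)
            + (deriv (fun t => u t * mm t) s * h_θ s + u s * mm s * deriv h_θ s)) := by
      intro s
      rw [hF'0 s, hPval s, hd_h1 s, hd_h2 s]
      ring
    rw [intervalIntegral.integral_congr (fun s _ => heq s),
      intervalIntegral.integral_add hi1 (hi2.add hi3),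
      intervalIntegral.integral_add hi2 hi3, ibp1, ibp2, ibp3]
    ring
  rw [funext h𝒱m]
  convert hderiv using 1
  linarith [hsum]
end

section
/- Let F be a finite-dimensional real inner product space, let M⁻¹ : F →L F be symmetric (⟨M⁻¹x, y⟩ = ⟨x, M⁻¹y⟩) and positive definite (⟨M⁻¹x, x⟩ > 0 for x ≠ 0), let V : F → ℝ be continuously differentiable, and let γ ≥ 0. Suppose q_α ∈ F is a strict local minimizer of V: there exists r₀ > 0 such that V(q) > V(q_α) whenever 0 < ‖q − q_α‖ ≤ r₀. Then the equilibrium (q_α, 0) is Lyapunov stable: for every ε > 0 there exists δ > 0 such that every pair of differentiable curves q, p : [0, ∞) → F satisfying q′(t) = M⁻¹p(t), p′(t) = −∇V(q(t)) − γ M⁻¹p(t) for all t ≥ 0 and ‖q(0) − q_α‖ + ‖p(0)‖ < δ satisfies ‖q(t) − q_α‖ + ‖p(t)‖ < ε for all t ≥ 0. -/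
open RealInnerProductSpace

/-- Lyapunov stability of the equilibrium (q_α, 0) of the
finite-dimensional damped Hamiltonian system q′ = M⁻¹p,
p′ = −∇V(q) − γM⁻¹p, when q_α is a strict local minimizer of the
(continuously differentiable) potential V, M⁻¹ is symmetric positive
definite and γ ≥ 0. -/
theorem damped_hamiltonian_lyapunov_stability
    {F : Type*} [NormedAddCommGroup F] [InnerProductSpace ℝ F]
    [FiniteDimensional ℝ F]
    (Minv : F →L[ℝ] F)
    (hsym : ∀ x y : F, ⟪Minv x, y⟫ = ⟪x, Minv y⟫)
    (hpd : ∀ x : F, x ≠ 0 → 0 < ⟪Minv x, x⟫)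
    (V : F → ℝ) (gradV : F → F)
    (hV : ∀ x : F, HasFDerivAt V (innerSL ℝ (gradV x)) x)
    (hgV : Continuous gradV)
    (γ : ℝ) (hγ : 0 ≤ γ)
    (qα : F) (r₀ : ℝ) (hr₀ : 0 < r₀)
    (hmin : ∀ x : F, 0 < ‖x - qα‖ → ‖x - qα‖ ≤ r₀ → V qα < V x) :
    ∀ ε > 0, ∃ δ > 0, ∀ q p : ℝ → F,
      (∀ t : ℝ, 0 ≤ t → HasDerivAt q (Minv (p t)) t) →
      (∀ t : ℝ, 0 ≤ t → HasDerivAt p (-gradV (q t) - γ • Minv (p t)) t) →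
      ‖q 0 - qα‖ + ‖p 0‖ < δ →
      ∀ t : ℝ, 0 ≤ t → ‖q t - qα‖ + ‖p t‖ < ε := by
  intro ε hε
  rcases subsingleton_or_nontrivial F with hF | hF
  · refine ⟨ε, hε, fun q p _ _ _ t _ => ?_⟩
    have h1 : q t - qα = 0 := Subsingleton.elim _ _
    have h2 : p t = (0 : F) := Subsingleton.elim _ _
    simp [h1, h2, hε]
  -- V is continuous
  have hVc : Continuous V := by
    rw [continuous_iff_continuousAt]; exact fun x => (hV x).continuousAt
  -- The Lyapunov function
  set W : F × F → ℝ := fun z => ⟪Minv z.2, z.2⟫ / 2 + V z.1 - V qα with hWdef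
  have hWc : Continuous W := by
    apply Continuous.sub _ continuous_const
    apply Continuous.add _ (hVc.comp continuous_fst)
    exact (continuous_inner.comp ((Minv.continuous.comp continuous_snd).prodMk
      continuous_snd)).div_const 2
  have hW0 : W (qα, (0 : F)) = 0 := by simp [hWdef]
  -- V is ≥ V qα on the ball of radius r₀
  have hge : ∀ x : F, ‖x - qα‖ ≤ r₀ → V qα ≤ V x := by
    intro x hx
    rcases eq_or_lt_of_le (norm_nonneg (x - qα)) with h | h
    · have : x - qα = 0 := by rw [← norm_eq_zero, ← h]
      rw [sub_eq_zero] at this; rw [this]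
    · exact (hmin x h hx).le
  set ε' := min ε r₀ with hε'def
  have hε'pos : 0 < ε' := lt_min hε hr₀
  have hε'r₀ : ε' ≤ r₀ := min_le_right _ _
  have hε'ε : ε' ≤ ε := min_le_left _ _
  -- The sphere K
  set K : Set (F × F) := {z | ‖z.1 - qα‖ + ‖z.2‖ = ε'} with hKdef
  have hKcl : IsClosed K := by
    have : Continuous fun z : F × F => ‖z.1 - qα‖ + ‖z.2‖ := by fun_prop
    exact isClosed_eq this continuous_const
  have hKbd : Bornology.IsBounded K := by
    apply Bornology.IsBounded.subset (Metric.isBounded_closedBall (x := ((qα, 0) : F × F)) (r := ε'))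
    intro z hz
    have hz' : ‖z.1 - qα‖ + ‖z.2‖ = ε' := hz
    rw [Metric.mem_closedBall, Prod.dist_eq, dist_eq_norm, dist_eq_norm, sub_zero]
    exact max_le (by nlinarith [norm_nonneg z.2]) (by nlinarith [norm_nonneg (z.1 - qα)])
  have hKcomp : IsCompact K := Metric.isCompact_of_isClosed_isBounded hKcl hKbd
  have hKne : K.Nonempty := by
    obtain ⟨v, hv⟩ := exists_ne (0 : F)
    refine ⟨(qα + (ε' / ‖v‖) • v, 0), ?_⟩
    have hvn : ‖v‖ ≠ 0 := norm_ne_zero_iff.mpr hv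
    simp only [hKdef, Set.mem_setOf_eq, add_sub_cancel_left, norm_zero, add_zero, norm_smul]
    rw [Real.norm_eq_abs, abs_div, abs_of_pos hε'pos, abs_of_nonneg (norm_nonneg v),
      div_mul_cancel₀ _ hvn]
  -- W is positive on K
  have hWpos : ∀ z ∈ K, 0 < W z := by
    intro z hz
    have hz' : ‖z.1 - qα‖ + ‖z.2‖ = ε' := hz
    have h1 : ‖z.1 - qα‖ ≤ r₀ := by nlinarith [norm_nonneg z.2]
    rcases eq_or_ne z.2 0 with h | h
    · have : ‖z.1 - qα‖ = ε' := by simpa [h] using hz'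
      have hVgt : V qα < V z.1 := hmin z.1 (by rw [this]; exact hε'pos) (this ▸ hε'r₀)
      simp only [hWdef, h]
      simp
      linarith
    · have h2 : 0 < ⟪Minv z.2, z.2⟫ := hpd z.2 h
      have h3 : V qα ≤ V z.1 := hge z.1 h1
      simp only [hWdef]; linarith
  -- minimum of W on K
  obtain ⟨z₀, hz₀K, hz₀min⟩ := hKcomp.exists_isMinOn hKne hWc.continuousOn
  set m := W z₀ with hmdef
  have hm : 0 < m := hWpos z₀ hz₀K
  -- choose δ₁ by continuity of W at (qα, 0)
  have hWcont : ContinuousAt W (qα, 0) := hWc.continuousAt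
  rw [Metric.continuousAt_iff] at hWcont
  obtain ⟨δ₁, hδ₁pos, hδ₁⟩ := hWcont m hm
  refine ⟨min δ₁ ε', lt_min hδ₁pos hε'pos, fun q p hq hp h0 t ht => ?_⟩
  by_contra hcon
  push_neg at hcon
  -- g is the distance function
  set g : ℝ → ℝ := fun s => ‖q s - qα‖ + ‖p s‖ with hgdef
  have hqc : ∀ s ∈ Set.Ici (0:ℝ), ContinuousAt q s := fun s hs => (hq s hs).continuousAt
  have hpc : ∀ s ∈ Set.Ici (0:ℝ), ContinuousAt p s := fun s hs => (hp s hs).continuousAt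
  have hgc : ContinuousOn g (Set.Ici 0) := by
    intro s hs
    exact (((hqc s hs).sub continuousAt_const).norm.add (hpc s hs).norm).continuousWithinAt
  have hg0 : g 0 < ε' := lt_of_lt_of_le h0 (min_le_right _ _)
  have hgt : ε' ≤ g t := le_trans hε'ε hcon
  -- find crossing time via IVT
  obtain ⟨t₁, ht₁mem, ht₁⟩ : ∃ t₁ ∈ Set.Icc (0:ℝ) t, g t₁ = ε' := by
    have := intermediate_value_Icc ht (hgc.mono (Set.Icc_subset_Ici_self))
    obtain ⟨t₁, h1, h2⟩ := this ⟨hg0.le, hgt⟩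
    exact ⟨t₁, h1, h2⟩
  -- energy function
  set e : ℝ → ℝ := fun s => ⟪Minv (p s), p s⟫ / 2 + V (q s) with hedef
  have hederiv : ∀ s : ℝ, 0 ≤ s →
      HasDerivAt e (-(γ * ⟪Minv (p s), Minv (p s)⟫)) s := by
    intro s hs
    have hqs := hq s hs
    have hps := hp s hs
    have h1 : HasDerivAt (fun u => Minv (p u))
        (Minv (-gradV (q s) - γ • Minv (p s))) s :=
      (Minv.hasFDerivAt).comp_hasDerivAt s hps
    have h2 : HasDerivAt (fun u => ⟪Minv (p u), p u⟫)
        (⟪Minv (p s), -gradV (q s) - γ • Minv (p s)⟫ +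
          ⟪Minv (-gradV (q s) - γ • Minv (p s)), p s⟫) s :=
      HasDerivAt.inner ℝ h1 hps
    have h3 : HasDerivAt (fun u => V (q u)) (⟪gradV (q s), Minv (p s)⟫) s := by
      have := (hV (q s)).comp_hasDerivAt s hqs
      simp at this
      exact this
    have h4 := (h2.div_const 2).add h3
    convert h4 using 1
    case e'_4 => rfl
    case e'_5 => rfl
    case e'_8 => rfl
    have hsymm : ⟪Minv (-gradV (q s) - γ • Minv (p s)), p s⟫
        = ⟪Minv (p s), -gradV (q s) - γ • Minv (p s)⟫ := by
      rw [hsym, real_inner_comm]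
    rw [hsymm]
    have hexp : ⟪Minv (p s), -gradV (q s) - γ • Minv (p s)⟫
        = -⟪Minv (p s), gradV (q s)⟫ - γ * ⟪Minv (p s), Minv (p s)⟫ := by
      rw [inner_sub_right, inner_neg_right, real_inner_smul_right]
    rw [hexp]
    rw [real_inner_comm (gradV (q s)) (Minv (p s))]
    ring
  -- e is antitone on [0, t₁]
  have hanti : AntitoneOn e (Set.Icc 0 t₁) := by
    apply antitoneOn_of_deriv_nonpos (convex_Icc 0 t₁)
    · intro s hs
      exact (hederiv s hs.1).continuousAt.continuousWithinAt
    · intro s hs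
      rw [interior_Icc] at hs
      exact (hederiv s hs.1.le).differentiableAt.differentiableWithinAt
    · intro s hs
      rw [interior_Icc] at hs
      rw [(hederiv s hs.1.le).deriv]
      have : 0 ≤ ⟪Minv (p s), Minv (p s)⟫ := real_inner_self_nonneg
      nlinarith
  have hWe : ∀ s, W (q s, p s) = e s - V qα := by intro s; simp [hWdef, hedef]
  -- W at time 0 is < m
  have hW0lt : W (q 0, p 0) < m := by
    have hd : dist ((q 0, p 0) : F × F) (qα, 0) < δ₁ := by
      rw [Prod.dist_eq, dist_eq_norm, dist_eq_norm, sub_zero]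
      have h0' : ‖q 0 - qα‖ + ‖p 0‖ < δ₁ := lt_of_lt_of_le h0 (min_le_left _ _)
      exact max_lt (by nlinarith [norm_nonneg (p 0)]) (by nlinarith [norm_nonneg (q 0 - qα)])
    have := hδ₁ hd
    rw [hW0, dist_zero_right, Real.norm_eq_abs] at this
    exact lt_of_le_of_lt (le_abs_self _) this
  -- W at time t₁ is ≥ m
  have hWt₁ : m ≤ W (q t₁, p t₁) := hz₀min (show ((q t₁, p t₁) : F × F) ∈ K from ht₁)
  -- contradiction via monotonicity
  have h0mem : (0:ℝ) ∈ Set.Icc (0:ℝ) t₁ := ⟨le_refl 0, ht₁mem.1⟩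
  have ht₁mem' : t₁ ∈ Set.Icc (0:ℝ) t₁ := ⟨ht₁mem.1, le_refl t₁⟩
  have hmono := hanti h0mem ht₁mem' ht₁mem.1
  have h1 := hWe 0
  have h2 := hWe t₁
  rw [h1] at hW0lt
  rw [h2] at hWt₁
  linarith
end
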